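/- For every predictor class P ⊆ [0,1]^X, every distinguisher class D ⊆ [−1,1]^X, every distribution μ over X, every advantage bound ε ∈ (0,1), and every failure probability bound δ ∈ (0,1), there exist a positive integer n with n ≤ O( ε^{−2} ( log N_{μ,Q}(D, ε/2) + log(2/δ) ) ) ≤ O( ε^{−2} ( log N_{μ,P}(D, ε/4) + log(2/δ) ) ), where Q = P − P = {p₁ − p₂ : p₁, p₂ ∈ P}, and an n-sample learner such that for every target predictor p* ∈ [0,1]^X, given n i.i.d. examples from μ_{p*}, the learner outputs a predictor p ∈ P with ‖p − p*‖_{μ,D} ≤ 3·inf_{p'∈P} ‖p' − p*‖_{μ,D} + ε with probability at least 1 − δ. -/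

import Mathlib

open scoped ENNReal Pointwise

noncomputable section

namespace OI

/-- Expectation of a real-valued function under a probability mass function. -/
def pexp {α : Type*} (q : PMF α) (f : α → ℝ) : ℝ := ∑' a, (q a).toReal * f a

/-- Inner product of two functions w.r.t. the distribution `μ`. -/
def inn {X : Type*} (μ : PMF X) (f g : X → ℝ) : ℝ := pexp μ fun x => f x * g x

/-- Dual Minkowski (semi)norm of `f` w.r.t. the class `F`. -/
def dnorm {X : Type*} (μ : PMF X) (F : Set (X → ℝ)) (f : X → ℝ) : ℝ :=
  sSup ((fun g => |inn μ f g|) '' F)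

/-- `C` is an ε-covering of `G` w.r.t. the seminorm defined by `F`. -/
def IsCover {X : Type*} (μ : PMF X) (F G : Set (X → ℝ)) (ε : ℝ) (C : Set (X → ℝ)) : Prop :=
  C ⊆ G ∧ ∀ g ∈ G, ∃ c ∈ C, dnorm μ F (g - c) ≤ ε

/-- Covering number `N_{μ,F}(G, ε)` (`⊤` if no finite covering exists). -/
def covN {X : Type*} (μ : PMF X) (F G : Set (X → ℝ)) (ε : ℝ) : ℕ∞ :=
  ⨅ (C : Set (X → ℝ)) (_ : IsCover μ F G ε C), C.encard

/-- Base-2 logarithm of an extended natural number (junk value on `⊤`). -/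
def elog2 (N : ℕ∞) : ℝ := Real.logb 2 (N.toNat : ℝ)

/-- Bernoulli distribution on `Bool` with mean (the truncation to `[0,1]` of) `r`. -/
def bern (r : ℝ) : PMF Bool := PMF.bernoulli (min (Real.toNNReal r) 1) (min_le_right _ _)

/-- The distribution `μ_p` of individual-outcome pairs. -/
def exDist {X : Type*} (μ : PMF X) (p : X → ℝ) : PMF (X × Bool) :=
  μ.bind fun x => (bern (p x)).map fun o => (x, o)

/-- `n` i.i.d. samples from `q`. -/
def iid {α : Type*} (q : PMF α) : (n : ℕ) → PMF (Fin n → α)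
  | 0 => PMF.pure Fin.elim0
  | n + 1 => (iid q n).bind fun v => q.map fun a => Fin.cons a v

/-- Probability of an event under a PMF. -/
def prob {α : Type*} (q : PMF α) (E : Set α) : ℝ≥0∞ := q.toOuterMeasure E

/-- A (possibly randomized) `n`-sample learner. -/
abbrev Learner (X : Type*) (n : ℕ) := (Fin n → X × Bool) → PMF (X → ℝ)

/-- Distribution of the learner output on `n` i.i.d. samples from `μ_{p*}`. -/
def outDist {X : Type*} (μ : PMF X) (pstar : X → ℝ) {n : ℕ} (A : Learner X n) :
    PMF (X → ℝ) :=
  (iid (exDist μ pstar) n).bind A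

/-- `p` is a predictor, i.e. takes values in `[0,1]`. -/
def Predictor {X : Type*} (p : X → ℝ) : Prop := ∀ x, p x ∈ Set.Icc (0 : ℝ) 1

/-- `d` takes values in `[-1,1]`. -/
def Dist1 {X : Type*} (d : X → ℝ) : Prop := ∀ x, d x ∈ Set.Icc (-1 : ℝ) 1

/-- The class `[0,1]^X` of all predictors. -/
def allPred (X : Type*) : Set (X → ℝ) := {p | Predictor p}

/-- The learner `A` succeeds for target `pstar`: with probability at least `1 - δ` it outputs
a predictor whose maximum distinguishing advantage w.r.t. `pstar` over `D` is at most `ε`. -/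
def Achieves {X : Type*} (μ : PMF X) (D : Set (X → ℝ)) (ε δ : ℝ) (pstar : X → ℝ) {n : ℕ}
    (A : Learner X n) : Prop :=
  ENNReal.ofReal (1 - δ) ≤
    prob (outDist μ pstar A) {p | Predictor p ∧ dnorm μ D (p - pstar) ≤ ε}

/-- The agnostic benchmark `inf_{p' ∈ P} ‖p' - pstar‖_{μ,D}`. -/
def agTarget {X : Type*} (μ : PMF X) (P D : Set (X → ℝ)) (pstar : X → ℝ) : ℝ :=
  sInf ((fun p' => dnorm μ D (p' - pstar)) '' P)

/-- The learner `A` succeeds agnostically for target `pstar`. -/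
def AchievesAg {X : Type*} (μ : PMF X) (P D : Set (X → ℝ)) (ε δ : ℝ) (pstar : X → ℝ) {n : ℕ}
    (A : Learner X n) : Prop :=
  ENNReal.ofReal (1 - δ) ≤
    prob (outDist μ pstar A)
      {p | Predictor p ∧ dnorm μ D (p - pstar) ≤ agTarget μ P D pstar + ε}

/-- Distribution-specific realizable OI learner. -/
def DSRL {X : Type*} (μ : PMF X) (P D : Set (X → ℝ)) (ε δ : ℝ) (n : ℕ)
    (A : Learner X n) : Prop :=
  ∀ pstar ∈ P, Achieves μ D ε δ pstar A

/-- Distribution-specific agnostic OI learner. -/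
def DSAL {X : Type*} (μ : PMF X) (P D : Set (X → ℝ)) (ε δ : ℝ) (n : ℕ)
    (A : Learner X n) : Prop :=
  ∀ pstar : X → ℝ, Predictor pstar → AchievesAg μ P D ε δ pstar A

/-- Distribution-free realizable OI learner. -/
def DFRL {X : Type*} (P D : Set (X → ℝ)) (ε δ : ℝ) (n : ℕ) (A : Learner X n) : Prop :=
  ∀ μ : PMF X, DSRL μ P D ε δ n A

/-- Distribution-free agnostic OI learner. -/
def DFAL {X : Type*} (P D : Set (X → ℝ)) (ε δ : ℝ) (n : ℕ) (A : Learner X n) : Prop :=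
  ∀ μ : PMF X, DSAL μ P D ε δ n A

/-- Sample complexity of distribution-specific realizable OI. -/
def SAMPDSR {X : Type*} (μ : PMF X) (P D : Set (X → ℝ)) (ε δ : ℝ) : ℕ∞ :=
  ⨅ (n : ℕ) (_ : ∃ A : Learner X n, DSRL μ P D ε δ n A), (n : ℕ∞)

/-- Sample complexity of distribution-specific agnostic OI. -/
def SAMPDSA {X : Type*} (μ : PMF X) (P D : Set (X → ℝ)) (ε δ : ℝ) : ℕ∞ :=
  ⨅ (n : ℕ) (_ : ∃ A : Learner X n, DSAL μ P D ε δ n A), (n : ℕ∞)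

/-- Sample complexity of distribution-free realizable OI. -/
def SAMPDFR {X : Type*} (P D : Set (X → ℝ)) (ε δ : ℝ) : ℕ∞ :=
  ⨅ (n : ℕ) (_ : ∃ A : Learner X n, DFRL P D ε δ n A), (n : ℕ∞)

/-- Sample complexity of distribution-free agnostic OI. -/
def SAMPDFA {X : Type*} (P D : Set (X → ℝ)) (ε δ : ℝ) : ℕ∞ :=
  ⨅ (n : ℕ) (_ : ∃ A : Learner X n, DFAL P D ε δ n A), (n : ℕ∞)

/-- The points `x 0, …, x (n-1)` are `γ`-fat shattered by `F`. -/
def Shatters {X : Type*} (F : Set (X → ℝ)) (γ : ℝ) {n : ℕ} (x : Fin n → X) : Prop :=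
  ∃ r : Fin n → ℝ, ∀ b : Fin n → Bool, ∃ f ∈ F,
    ∀ i, γ ≤ (if b i then (1 : ℝ) else -1) * (f (x i) - r i)

/-- The `γ`-fat-shattering dimension of `F`. -/
def fatDim {X : Type*} (F : Set (X → ℝ)) (γ : ℝ) : ℕ∞ :=
  ⨆ (n : ℕ) (_ : ∃ x : Fin n → X, Shatters F γ x), (n : ℕ∞)

section Aux
variable {α β : Type*}

def eexp (q : PMF α) (f : α → ℝ≥0∞) : ℝ≥0∞ := ∑' a, q a * f a

lemma eexp_pure (a : α) (f : α → ℝ≥0∞) : eexp (PMF.pure a) f = f a := by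
  unfold eexp
  rw [tsum_eq_single a (by intro b hb; simp [PMF.pure_apply, hb])]
  simp [PMF.pure_apply]

lemma eexp_bind (q : PMF α) (k : α → PMF β) (f : β → ℝ≥0∞) :
    eexp (q.bind k) f = eexp q fun a => eexp (k a) f := by
  unfold eexp
  simp only [PMF.bind_apply]
  calc ∑' b, (∑' a, q a * k a b) * f b
      = ∑' b, ∑' a, q a * (k a b * f b) := by
        refine tsum_congr fun b => ?_
        rw [← ENNReal.tsum_mul_right]
        exact tsum_congr fun a => (mul_assoc _ _ _)
    _ = ∑' a, ∑' b, q a * (k a b * f b) := ENNReal.tsum_comm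
    _ = ∑' a, q a * ∑' b, k a b * f b := tsum_congr fun a => (ENNReal.tsum_mul_left).symm ▸ rfl

lemma eexp_map (q : PMF α) (g : α → β) (f : β → ℝ≥0∞) :
    eexp (q.map g) f = eexp q (f ∘ g) := by
  rw [PMF.map, eexp_bind]
  simp only [eexp_pure, Function.comp]
  rfl

lemma eexp_const (q : PMF α) (c : ℝ≥0∞) : eexp q (fun _ => c) = c := by
  unfold eexp
  rw [ENNReal.tsum_mul_right, q.tsum_coe, one_mul]

lemma eexp_add (q : PMF α) (f g : α → ℝ≥0∞) :
    eexp q (fun a => f a + g a) = eexp q f + eexp q g := by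
  unfold eexp
  rw [← ENNReal.tsum_add]
  exact tsum_congr fun a => mul_add _ _ _

lemma eexp_mono (q : PMF α) {f g : α → ℝ≥0∞} (h : ∀ a, f a ≤ g a) : eexp q f ≤ eexp q g :=
  ENNReal.tsum_le_tsum fun a => mul_le_mul_right (h a) _

lemma eexp_mul_const (q : PMF α) (f : α → ℝ≥0∞) (c : ℝ≥0∞) :
    eexp q (fun a => c * f a) = c * eexp q f := by
  unfold eexp
  rw [← ENNReal.tsum_mul_left]
  exact tsum_congr fun a => by ring

lemma summable_pexp (q : PMF α) (g : α → ℝ) (B : ℝ) (hB : ∀ a, |g a| ≤ B) :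
    Summable fun a => (q a).toReal * g a := by
  have hs : Summable fun a => (q a).toReal := ENNReal.summable_toReal (by rw [q.tsum_coe]; simp)
  refine Summable.of_abs ?_
  refine Summable.of_nonneg_of_le (fun a => abs_nonneg _) (fun a => ?_) (hs.mul_right B)
  rw [abs_mul, abs_of_nonneg ENNReal.toReal_nonneg]
  exact mul_le_mul_of_nonneg_left (hB a) ENNReal.toReal_nonneg

lemma tsum_toReal_coe (q : PMF α) : ∑' a, (q a).toReal = 1 := by
  have := ENNReal.tsum_toReal_eq (f := fun a => q a) (fun a => PMF.apply_ne_top q a)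
  rw [q.tsum_coe] at this
  simpa using this.symm

lemma pexp_const (q : PMF α) (c : ℝ) : pexp q (fun _ => c) = c := by
  unfold pexp
  rw [tsum_mul_right, tsum_toReal_coe, one_mul]

lemma pexp_add (q : PMF α) {f g : α → ℝ} (hf : Summable fun a => (q a).toReal * f a)
    (hg : Summable fun a => (q a).toReal * g a) :
    pexp q (fun a => f a + g a) = pexp q f + pexp q g := by
  unfold pexp
  rw [← hf.tsum_add hg]
  exact tsum_congr fun a => mul_add _ _ _

lemma pexp_neg (q : PMF α) (f : α → ℝ) : pexp q (fun a => -f a) = -pexp q f := by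
  unfold pexp
  rw [← tsum_neg]
  exact tsum_congr fun a => by ring

lemma abs_pexp_le (q : PMF α) (f : α → ℝ) (B : ℝ) (hB : ∀ a, |f a| ≤ B) (hB0 : 0 ≤ B) :
    |pexp q f| ≤ B := by
  unfold pexp
  have h1 : |∑' a, (q a).toReal * f a| ≤ ∑' a, |(q a).toReal * f a| := by
    have : ‖∑' a, (q a).toReal * f a‖ ≤ ∑' a, ‖(q a).toReal * f a‖ :=
      norm_tsum_le_tsum_norm ((summable_pexp q f B hB).abs)
    simpa [Real.norm_eq_abs, abs_mul] using this
  refine h1.trans ?_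
  have h2 : ∑' a, |(q a).toReal * f a| ≤ ∑' a, (q a).toReal * B := by
    refine Summable.tsum_le_tsum (fun a => ?_) (summable_pexp q f B hB).abs ?_
    · rw [abs_mul, abs_of_nonneg ENNReal.toReal_nonneg]
      exact mul_le_mul_of_nonneg_left (hB a) ENNReal.toReal_nonneg
    · exact (ENNReal.summable_toReal (by rw [q.tsum_coe]; simp)).mul_right B
  rw [tsum_mul_right, tsum_toReal_coe, one_mul] at h2
  exact h2

lemma eexp_ofReal (q : PMF α) (g : α → ℝ) (h0 : ∀ a, 0 ≤ g a) (B : ℝ) (hB : ∀ a, |g a| ≤ B) :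
    eexp q (fun a => ENNReal.ofReal (g a)) = ENNReal.ofReal (pexp q g) := by
  unfold eexp pexp
  rw [ENNReal.ofReal_tsum_of_nonneg (fun a => mul_nonneg ENNReal.toReal_nonneg (h0 a))
    (summable_pexp q g B hB)]
  refine tsum_congr fun a => ?_
  rw [ENNReal.ofReal_mul ENNReal.toReal_nonneg, ENNReal.ofReal_toReal (PMF.apply_ne_top q a)]

end Aux



section Aux2
variable {α : Type*}
open Real

lemma prob_apply (q : PMF α) (E : Set α) : prob q E = ∑' a, E.indicator q a :=
  PMF.toOuterMeasure_apply q E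

lemma prob_mono (q : PMF α) {E F : Set α} (h : E ⊆ F) : prob q E ≤ prob q F :=
  q.toOuterMeasure.mono h

lemma prob_union_le (q : PMF α) (E F : Set α) : prob q (E ∪ F) ≤ prob q E + prob q F :=
  MeasureTheory.measure_union_le (μ := q.toOuterMeasure) E F

lemma markov (q : PMF α) (f : α → ℝ≥0∞) (c : ℝ≥0∞) :
    prob q {a | c ≤ f a} * c ≤ eexp q f := by
  rw [prob_apply, ← ENNReal.tsum_mul_right]
  refine ENNReal.tsum_le_tsum fun a => ?_
  by_cases h : a ∈ {a | c ≤ f a}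
  · rw [Set.indicator_of_mem h]; exact mul_le_mul_right h _
  · rw [Set.indicator_of_notMem h, zero_mul]; exact zero_le

lemma exp_quad {x : ℝ} (hx : |x| ≤ 1) : Real.exp x ≤ 1 + x + x ^ 2 := by
  have h := Real.exp_bound hx (by norm_num : (0:ℕ) < 2)
  have hsum : ∑ i ∈ Finset.range 2, x ^ i / (i.factorial : ℝ) = 1 + x := by
    simp [Finset.sum_range_succ]
  rw [hsum] at h
  have h2 := (le_abs_self (Real.exp x - (1 + x))).trans h
  have h4 : ((((2:ℕ).succ : ℝ)) / (((2:ℕ).factorial : ℝ) * ((2:ℕ) : ℝ))) = 3 / 4 := by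
    norm_num [Nat.factorial]
  rw [h4, sq_abs] at h2
  nlinarith [sq_nonneg x]

lemma mgf_single (q : PMF α) (h : α → ℝ) (hb : ∀ a, |h a| ≤ 1) {t : ℝ} (ht : 0 < t)
    (ht2 : t ≤ 1 / 2) :
    eexp q (fun a => ENNReal.ofReal (Real.exp (t * (h a - pexp q h)))) ≤
      ENNReal.ofReal (Real.exp (4 * t ^ 2)) := by
  set m := pexp q h with hm
  have hmb : |m| ≤ 1 := abs_pexp_le q h 1 hb zero_le_one
  have hY : ∀ a, |h a - m| ≤ 2 := by
    intro a
    calc |h a - m| ≤ |h a| + |m| := abs_sub _ _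
    _ ≤ 2 := by linarith [hb a]
  have hc0 : (0:ℝ) ≤ Real.exp (4 * t ^ 2) - 2 * t := by
    have : (1:ℝ) ≤ Real.exp (4 * t ^ 2) := by
      rw [← Real.exp_zero]; exact Real.exp_le_exp.2 (by positivity)
    linarith
  have key : ∀ a, Real.exp (t * (h a - m)) ≤
      (Real.exp (4 * t ^ 2) - 2 * t) + t * (h a - m + 2) := by
    intro a
    have hx : |t * (h a - m)| ≤ 1 := by
      rw [abs_mul, abs_of_pos ht]
      have := mul_le_mul ht2 (hY a) (abs_nonneg _) (by norm_num : (0:ℝ) ≤ 1/2)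
      linarith
    have h1 := exp_quad hx
    have h2 : (t * (h a - m)) ^ 2 ≤ 4 * t ^ 2 := by
      rw [mul_pow]
      have : (h a - m) ^ 2 ≤ 4 := by
        have := hY a; nlinarith [abs_nonneg (h a - m), sq_abs (h a - m)]
      nlinarith [sq_nonneg t]
    have h3 : (1:ℝ) + 4 * t ^ 2 ≤ Real.exp (4 * t ^ 2) := by
      have := Real.add_one_le_exp (4 * t ^ 2); linarith
    linarith
  calc eexp q (fun a => ENNReal.ofReal (Real.exp (t * (h a - m))))
      ≤ eexp q (fun a => ENNReal.ofReal ((Real.exp (4 * t ^ 2) - 2 * t) + t * (h a - m + 2))) :=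
        eexp_mono q fun a => ENNReal.ofReal_le_ofReal (key a)
    _ = eexp q (fun a => ENNReal.ofReal (Real.exp (4 * t ^ 2) - 2 * t) +
          ENNReal.ofReal t * ENNReal.ofReal (h a - m + 2)) := by
        refine congrArg _ (funext fun a => ?_)
        rw [ENNReal.ofReal_add hc0 (by nlinarith [hY a, neg_abs_le (h a - m)]),
          ← ENNReal.ofReal_mul ht.le]
    _ = ENNReal.ofReal (Real.exp (4 * t ^ 2) - 2 * t) +
          ENNReal.ofReal t * ENNReal.ofReal (pexp q (fun a => h a - m + 2)) := by
        rw [eexp_add, eexp_const, eexp_mul_const, eexp_ofReal q _ ?h0 4 ?hB]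
        case h0 => intro a; nlinarith [hY a, neg_abs_le (h a - m)]
        case hB => intro a
                   rw [abs_of_nonneg (by nlinarith [hY a, neg_abs_le (h a - m)])]
                   nlinarith [hY a, le_abs_self (h a - m)]
    _ = ENNReal.ofReal (Real.exp (4 * t ^ 2)) := by
        have hp : pexp q (fun a => h a - m + 2) = 2 := by
          have : (fun a => h a - m + 2) = fun a => h a + (2 - m) := by funext a; ring
          rw [this, pexp_add q (summable_pexp q h 1 hb)
            (summable_pexp q _ (|2 - m|) (fun a => le_refl _)),
            pexp_const, ← hm]
          ring
        rw [hp, ← ENNReal.ofReal_mul ht.le, ← ENNReal.ofReal_add hc0 (by linarith)]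
        ring_nf

lemma mgf_iid (q : PMF α) (g : α → ℝ≥0∞) (n : ℕ) :
    eexp (iid q n) (fun s => ∏ i, g (s i)) = (eexp q g) ^ n := by
  induction n with
  | zero => rw [iid, eexp_pure]; simp
  | succ n ih =>
    rw [iid, eexp_bind]
    have h1 : ∀ v : Fin n → α, eexp (q.map fun a => Fin.cons a v) (fun s => ∏ i, g (s i))
        = eexp q g * ∏ i, g (v i) := by
      intro v
      rw [eexp_map]
      have : ((fun s : Fin (n+1) → α => ∏ i, g (s i)) ∘ fun a => Fin.cons a v)
          = fun a => g a * ∏ i, g (v i) := by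
        funext a
        simp only [Function.comp]
        rw [Fin.prod_univ_succ]
        simp [Fin.cons_zero, Fin.cons_succ]
      rw [this]
      have : (fun a => g a * ∏ i, g (v i)) = fun a => (∏ i, g (v i)) * g a := by
        funext a; ring
      rw [this, eexp_mul_const]
      ring
    calc eexp (iid q n) (fun v => eexp (q.map fun a => Fin.cons a v) fun s => ∏ i, g (s i))
        = eexp (iid q n) (fun v => eexp q g * ∏ i, g (v i)) := by
          exact congrArg _ (funext h1)
      _ = eexp q g * (eexp q g) ^ n := by rw [eexp_mul_const, ih]
      _ = (eexp q g) ^ (n + 1) := by ring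

lemma ofReal_exp_sum {n : ℕ} (f : Fin n → ℝ) :
    ENNReal.ofReal (Real.exp (∑ i, f i)) = ∏ i, ENNReal.ofReal (Real.exp (f i)) := by
  rw [Real.exp_sum]
  induction (Finset.univ : Finset (Fin n)) using Finset.induction_on with
  | empty => simp
  | insert _ _ hx ih =>
    rw [Finset.prod_insert hx, Finset.prod_insert hx,
      ENNReal.ofReal_mul (Real.exp_pos _).le, ih]

lemma chern_one (q : PMF α) (h : α → ℝ) (hb : ∀ a, |h a| ≤ 1) {ε : ℝ} (hε : 0 < ε)
    (hε1 : ε ≤ 1) (n : ℕ) :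
    prob (iid q n) {s | (n:ℝ) * ε ≤ ∑ i, (h (s i) - pexp q h)} ≤
      ENNReal.ofReal (Real.exp (-(n * ε ^ 2) / 16)) := by
  set t : ℝ := ε / 8 with htdef
  have ht : 0 < t := by positivity
  have ht2 : t ≤ 1 / 2 := by rw [htdef]; linarith
  set m := pexp q h with hm
  set c : ℝ≥0∞ := ENNReal.ofReal (Real.exp (t * ((n:ℝ) * ε))) with hcdef
  have hc0 : c ≠ 0 := by simp [hcdef, (Real.exp_pos _).le, Real.exp_pos]
  have hctop : c ≠ ⊤ := ENNReal.ofReal_ne_top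
  have hFkey : ∀ s : Fin n → α, ENNReal.ofReal (Real.exp (t * ∑ i, (h (s i) - m)))
      = ∏ i, ENNReal.ofReal (Real.exp (t * (h (s i) - m))) := by
    intro s
    rw [Finset.mul_sum, ofReal_exp_sum]
  have hsub : {s : Fin n → α | (n:ℝ) * ε ≤ ∑ i, (h (s i) - m)} ⊆
      {s | c ≤ ∏ i, ENNReal.ofReal (Real.exp (t * (h (s i) - m)))} := by
    intro s hs
    rw [Set.mem_setOf_eq, ← hFkey]
    exact ENNReal.ofReal_le_ofReal (Real.exp_le_exp.2 (mul_le_mul_of_nonneg_left hs ht.le))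
  have hmgf : eexp (iid q n) (fun s => ∏ i, ENNReal.ofReal (Real.exp (t * (h (s i) - m)))) ≤
      ENNReal.ofReal (Real.exp (4 * t ^ 2)) ^ n := by
    rw [mgf_iid q (fun a => ENNReal.ofReal (Real.exp (t * (h a - m)))) n]
    exact pow_le_pow_left' (mgf_single q h hb ht ht2) n
  have hmark := markov (iid q n) (fun s => ∏ i, ENNReal.ofReal (Real.exp (t * (h (s i) - m)))) c
  have h1 : prob (iid q n) {s | c ≤ ∏ i, ENNReal.ofReal (Real.exp (t * (h (s i) - m)))} ≤
      ENNReal.ofReal (Real.exp (4 * t ^ 2)) ^ n / c := by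
    rw [ENNReal.le_div_iff_mul_le (Or.inl hc0) (Or.inl hctop)]
    exact hmark.trans hmgf
  refine (prob_mono _ hsub).trans (h1.trans ?_)
  rw [← ENNReal.ofReal_pow (Real.exp_pos _).le, ← Real.exp_nat_mul, hcdef,
    ← ENNReal.ofReal_div_of_pos (Real.exp_pos _), ← Real.exp_sub]
  refine ENNReal.ofReal_le_ofReal (Real.exp_le_exp.2 ?_)
  rw [htdef]
  have hn : (0:ℝ) ≤ (n:ℝ) := Nat.cast_nonneg n
  ring_nf
  nlinarith [sq_nonneg ε, hn, hε]


lemma chern2 (q : PMF α) (h : α → ℝ) (hb : ∀ a, |h a| ≤ 1) {ε : ℝ} (hε : 0 < ε)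
    (hε1 : ε ≤ 1) (n : ℕ) :
    prob (iid q n) {s | (n:ℝ) * ε ≤ |(∑ i, h (s i)) - n * pexp q h|} ≤
      2 * ENNReal.ofReal (Real.exp (-(n * ε ^ 2) / 16)) := by
  set m := pexp q h with hm
  have hsum : ∀ s : Fin n → α, (∑ i, h (s i)) - n * m = ∑ i, (h (s i) - m) := by
    intro s
    rw [Finset.sum_sub_distrib, Finset.sum_const, Finset.card_univ, Fintype.card_fin,
      nsmul_eq_mul]
  have hneg : ∀ a, |(fun a => -h a) a| ≤ 1 := fun a => by rw [abs_neg]; exact hb a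
  have hmneg : pexp q (fun a => -h a) = -m := pexp_neg q h
  have hsplit : {s : Fin n → α | (n:ℝ) * ε ≤ |(∑ i, h (s i)) - n * m|} ⊆
      {s | (n:ℝ) * ε ≤ ∑ i, (h (s i) - m)} ∪
      {s | (n:ℝ) * ε ≤ ∑ i, ((fun a => -h a) (s i) - pexp q (fun a => -h a))} := by
    intro s hs
    have hs' : (n:ℝ) * ε ≤ |(∑ i, h (s i)) - n * m| := hs
    rcases le_abs.1 hs' with h1 | h1
    · left; rw [Set.mem_setOf_eq, ← hsum]; exact h1
    · right
      rw [Set.mem_setOf_eq, hmneg]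
      have : ∑ i, (-h (s i) - -m) = -((∑ i, h (s i)) - n * m) := by
        rw [hsum, ← Finset.sum_neg_distrib]
        exact Finset.sum_congr rfl fun i _ => by ring
      rw [this]; exact h1
  refine (prob_mono _ hsplit).trans ((prob_union_le _ _ _).trans ?_)
  rw [two_mul]
  exact add_le_add (chern_one q h hb hε hε1 n) (chern_one q (fun a => -h a) hneg hε hε1 n)

lemma eexp_bool (q : PMF Bool) (g : Bool → ℝ≥0∞) :
    eexp q g = q false * g false + q true * g true := by
  unfold eexp; rw [tsum_bool]

lemma pexp_nonneg (q : PMF α) {f : α → ℝ} (h0 : ∀ a, 0 ≤ f a) : 0 ≤ pexp q f :=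
  tsum_nonneg fun a => mul_nonneg ENNReal.toReal_nonneg (h0 a)




lemma pexp_exDist {X : Type*} (μ : PMF X) (p d : X → ℝ) (hp : ∀ x, p x ∈ Set.Icc (0:ℝ) 1)
    (hd : ∀ x, |d x| ≤ 1) :
    pexp (exDist μ p) (fun xo => (if xo.2 then (1:ℝ) else 0) * d xo.1) =
      pexp μ (fun x => p x * d x) := by
  set h : X × Bool → ℝ := fun xo => (if xo.2 then (1:ℝ) else 0) * d xo.1 with hh
  have hhb : ∀ xo, |h xo| ≤ 1 := by
    rintro ⟨x, o⟩
    rw [hh]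
    cases o <;> simp [hd x]
  have hpd : ∀ x, |p x * d x| ≤ 1 := by
    intro x
    rw [abs_mul, abs_of_nonneg (hp x).1]
    calc p x * |d x| ≤ 1 * 1 :=
      mul_le_mul (hp x).2 (hd x) (abs_nonneg _) zero_le_one
    _ = 1 := by norm_num
  have E1 : eexp (exDist μ p) (fun xo => ENNReal.ofReal (h xo + 1)) =
      ENNReal.ofReal (pexp (exDist μ p) h + 1) := by
    rw [eexp_ofReal _ _ (fun xo => by linarith [neg_abs_le (h xo), hhb xo]) 2
      (fun xo => by rw [abs_of_nonneg (by linarith [neg_abs_le (h xo), hhb xo])]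
                    linarith [le_abs_self (h xo), hhb xo]),
      pexp_add _ (summable_pexp _ h 1 hhb) (summable_pexp _ _ 1 (fun _ => by norm_num)),
      pexp_const]
  have E2 : eexp (exDist μ p) (fun xo => ENNReal.ofReal (h xo + 1)) =
      ENNReal.ofReal (pexp μ (fun x => p x * d x) + 1) := by
    rw [exDist, eexp_bind]
    have hinner : ∀ x, eexp ((bern (p x)).map fun o => (x, o))
        (fun xo => ENNReal.ofReal (h xo + 1)) = ENNReal.ofReal (1 + p x * d x) := by
      intro x
      rw [eexp_map, eexp_bool]
      have hb1 : (bern (p x)) true = ENNReal.ofReal (p x) := by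
        simp only [bern, PMF.bernoulli_apply, Bool.cond_true]
        rw [min_eq_left (Real.toNNReal_le_one.2 (hp x).2)]
        rfl
      have hb0 : (bern (p x)) false = ENNReal.ofReal (1 - p x) := by
        simp only [bern, PMF.bernoulli_apply, Bool.cond_false]
        rw [min_eq_left (Real.toNNReal_le_one.2 (hp x).2), ENNReal.ofReal_sub 1 (hp x).1,
          ENNReal.ofReal_one, ENNReal.coe_sub, ENNReal.coe_one]
        rfl
      have hft : h (x, true) = d x := by rw [hh]; simp
      have hff : h (x, false) = 0 := by rw [hh]; simp
      simp only [Function.comp]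
      rw [hb0, hb1, hft, hff]
      rw [← ENNReal.ofReal_mul (by linarith [(hp x).2]),
        ← ENNReal.ofReal_mul (hp x).1,
        ← ENNReal.ofReal_add (by nlinarith [(hp x).1, (hp x).2])
          (by nlinarith [(hp x).1, neg_abs_le (d x), hd x])]
      ring_nf
    calc eexp μ (fun x => eexp ((bern (p x)).map fun o => (x, o))
          (fun xo => ENNReal.ofReal (h xo + 1)))
        = eexp μ (fun x => ENNReal.ofReal (1 + p x * d x)) :=
          congrArg _ (funext hinner)
      _ = ENNReal.ofReal (pexp μ (fun x => 1 + p x * d x)) := by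
          refine eexp_ofReal _ _ (fun x => by linarith [neg_abs_le (p x * d x), hpd x]) 2
            (fun x => by rw [abs_of_nonneg (by linarith [neg_abs_le (p x * d x), hpd x])]
                         linarith [le_abs_self (p x * d x), hpd x])
      _ = ENNReal.ofReal (pexp μ (fun x => p x * d x) + 1) := by
          have : (fun x => 1 + p x * d x) = fun x => p x * d x + 1 := by
            funext x; ring
          rw [this, pexp_add _ (summable_pexp _ _ 1 hpd)
            (summable_pexp _ _ 1 (fun _ => by norm_num)), pexp_const]
  have hnn1 : 0 ≤ pexp (exDist μ p) h + 1 := by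
    linarith [neg_abs_le (pexp (exDist μ p) h), abs_pexp_le (exDist μ p) h 1 hhb zero_le_one]
  have hnn2 : 0 ≤ pexp μ (fun x => p x * d x) + 1 := by
    linarith [neg_abs_le (pexp μ fun x => p x * d x), abs_pexp_le μ _ 1 hpd zero_le_one]
  have := E1.symm.trans E2
  rw [ENNReal.ofReal_eq_ofReal_iff hnn1 hnn2] at this
  linarith

end Aux2


section Aux3
variable {X : Type*}

lemma pexp_sub (q : PMF X) {f g : X → ℝ} (hf : Summable fun a => (q a).toReal * f a)
    (hg : Summable fun a => (q a).toReal * g a) :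
    pexp q (fun a => f a - g a) = pexp q f - pexp q g := by
  have hng : Summable fun a => (q a).toReal * (-g a) := by
    have h0 : (fun a => (q a).toReal * (-g a)) = fun a => -((q a).toReal * g a) := by
      funext a; ring
    rw [h0]; exact hg.neg
  have h1 : (fun a => f a - g a) = fun a => f a + (- g a) := by funext a; ring
  rw [h1, pexp_add q hf hng, pexp_neg]
  ring

lemma abs_inn_le (μ : PMF X) (f g : X → ℝ) {Bf Bg : ℝ} (hf : ∀ x, |f x| ≤ Bf)
    (hg : ∀ x, |g x| ≤ Bg) (hBf : 0 ≤ Bf) (hBg : 0 ≤ Bg) : |inn μ f g| ≤ Bf * Bg := by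
  refine abs_pexp_le μ _ (Bf * Bg) (fun x => ?_) (mul_nonneg hBf hBg)
  rw [abs_mul]
  exact mul_le_mul (hf x) (hg x) (abs_nonneg _) hBf

lemma dnorm_bddAbove (μ : PMF X) (F : Set (X → ℝ)) (f : X → ℝ) {b : ℝ}
    (h : ∀ g ∈ F, |inn μ f g| ≤ b) : BddAbove ((fun g => |inn μ f g|) '' F) := by
  refine ⟨b, ?_⟩
  rintro _ ⟨g, hg, rfl⟩
  exact h g hg

lemma le_dnorm (μ : PMF X) {F : Set (X → ℝ)} {f g : X → ℝ} (hg : g ∈ F) {b : ℝ}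
    (hb : ∀ g ∈ F, |inn μ f g| ≤ b) : |inn μ f g| ≤ dnorm μ F f :=
  le_csSup (dnorm_bddAbove μ F f hb) (Set.mem_image_of_mem _ hg)

lemma dnorm_le (μ : PMF X) {F : Set (X → ℝ)} (hne : F.Nonempty) {f : X → ℝ} {b : ℝ}
    (h : ∀ g ∈ F, |inn μ f g| ≤ b) : dnorm μ F f ≤ b := by
  refine csSup_le (hne.image _) ?_
  rintro _ ⟨g, hg, rfl⟩
  exact h g hg

lemma summable_mul_of_bounds (q : PMF X) (f g : X → ℝ) {Bf Bg : ℝ} (hf : ∀ x, |f x| ≤ Bf)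
    (hg : ∀ x, |g x| ≤ Bg) (hBf : 0 ≤ Bf) :
    Summable fun a => (q a).toReal * (f a * g a) := by
  refine summable_pexp q _ (Bf * Bg) (fun a => ?_)
  rw [abs_mul]
  exact mul_le_mul (hf a) (hg a) (abs_nonneg _) hBf

lemma inn_sub_right (μ : PMF X) (f g₁ g₂ : X → ℝ) {Bf B1 B2 : ℝ} (hf : ∀ x, |f x| ≤ Bf)
    (hg1 : ∀ x, |g₁ x| ≤ B1) (hg2 : ∀ x, |g₂ x| ≤ B2) (hBf : 0 ≤ Bf) :
    inn μ f (g₁ - g₂) = inn μ f g₁ - inn μ f g₂ := by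
  unfold inn
  have h1 : (fun x => f x * (g₁ - g₂) x) = fun x => f x * g₁ x - f x * g₂ x := by
    funext x; simp only [Pi.sub_apply]; ring
  rw [h1, pexp_sub μ (summable_mul_of_bounds μ f g₁ hf hg1 hBf)
    (summable_mul_of_bounds μ f g₂ hf hg2 hBf)]

lemma inn_sub_left (μ : PMF X) (f₁ f₂ g : X → ℝ) {B1 B2 Bg : ℝ} (hf1 : ∀ x, |f₁ x| ≤ B1)
    (hf2 : ∀ x, |f₂ x| ≤ B2) (hg : ∀ x, |g x| ≤ Bg) (hB1 : 0 ≤ B1) (hB2 : 0 ≤ B2) :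
    inn μ (f₁ - f₂) g = inn μ f₁ g - inn μ f₂ g := by
  unfold inn
  have h1 : (fun x => (f₁ - f₂) x * g x) = fun x => f₁ x * g x - f₂ x * g x := by
    funext x; simp only [Pi.sub_apply]; ring
  rw [h1, pexp_sub μ (summable_mul_of_bounds μ f₁ g hf1 hg hB1)
    (summable_mul_of_bounds μ f₂ g hf2 hg hB2)]

lemma covN_PP_le (μ : PMF X) (P D : Set (X → ℝ)) (hPne : P.Nonempty)
    (hP : ∀ p ∈ P, Predictor p) (hD : ∀ d ∈ D, Dist1 d) {ε : ℝ} (hε : 0 ≤ ε) :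
    covN μ (P - P) D (ε / 2) ≤ covN μ P D (ε / 4) := by
  have hPb : ∀ p ∈ P, ∀ x, |p x| ≤ 1 := by
    intro p hp x
    rcases (hP p hp) x with ⟨h0, h1⟩
    rw [abs_le]; constructor <;> linarith
  have hDb : ∀ d ∈ D, ∀ x, |d x| ≤ 1 := by
    intro d hd x
    rcases (hD d hd) x with ⟨h0, h1⟩
    rw [abs_le]; constructor <;> linarith
  have key : ∀ C, IsCover μ P D (ε / 4) C → IsCover μ (P - P) D (ε / 2) C := by
    rintro C ⟨hCD, hcov⟩
    refine ⟨hCD, fun g hg => ?_⟩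
    obtain ⟨c, hcC, hc⟩ := hcov g hg
    refine ⟨c, hcC, ?_⟩
    have hfb : ∀ x, |(g - c) x| ≤ 2 := by
      intro x
      simp only [Pi.sub_apply]
      calc |g x - c x| ≤ |g x| + |c x| := abs_sub _ _
      _ ≤ 2 := by linarith [hDb g hg x, hDb c (hCD hcC) x]
    have hPPne : (P - P).Nonempty := by
      obtain ⟨p, hp⟩ := hPne
      exact ⟨p - p, Set.sub_mem_sub hp hp⟩
    refine dnorm_le μ hPPne ?_
    rintro q hq
    obtain ⟨p₁, hp₁, p₂, hp₂, rfl⟩ := Set.mem_sub.1 hq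
    rw [inn_sub_right μ (g - c) p₁ p₂ hfb (hPb p₁ hp₁) (hPb p₂ hp₂) (by norm_num)]
    have hb2 : ∀ p' ∈ P, |inn μ (g - c) p'| ≤ 2 * 1 := fun p' hp' =>
      abs_inn_le μ _ _ hfb (hPb p' hp') (by norm_num) zero_le_one
    have h1 := (le_dnorm μ hp₁ hb2).trans hc
    have h2 := (le_dnorm μ hp₂ hb2).trans hc
    calc |inn μ (g - c) p₁ - inn μ (g - c) p₂| ≤ |inn μ (g - c) p₁| + |inn μ (g - c) p₂| :=
      abs_sub _ _
    _ ≤ ε / 2 := by linarith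
  refine le_iInf fun C => le_iInf fun hC => ?_
  exact iInf_le_of_le C (iInf_le_of_le (key C hC) le_rfl)

lemma inn_comm (μ : PMF X) (f g : X → ℝ) : inn μ f g = inn μ g f := by
  unfold inn pexp
  exact tsum_congr fun x => by ring

lemma abs_sub_two {u v : X → ℝ} (hu : ∀ x, |u x| ≤ 1) (hv : ∀ x, |v x| ≤ 1) :
    ∀ x, |(u - v) x| ≤ 2 := fun x => by
  simp only [Pi.sub_apply]
  calc |u x - v x| ≤ |u x| + |v x| := abs_sub _ _
  _ ≤ 2 := by linarith [hu x, hv x]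

lemma prob_le_one {α : Type*} (q : PMF α) (E : Set α) : prob q E ≤ 1 := by
  rw [prob_apply, ← q.tsum_coe]
  exact ENNReal.tsum_le_tsum fun a => Set.indicator_le_self' (fun _ _ => zero_le) a

lemma prob_compl_add {α : Type*} (q : PMF α) (U : Set α) : prob q Uᶜ + prob q U = 1 := by
  rw [prob_apply, prob_apply, ← ENNReal.tsum_add, ← q.tsum_coe]
  refine tsum_congr fun a => ?_
  by_cases h : a ∈ U
  · rw [Set.indicator_of_notMem (by simp [h]), Set.indicator_of_mem h, zero_add]
  · rw [Set.indicator_of_mem (Set.mem_compl h), Set.indicator_of_notMem h, add_zero]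

lemma prob_biUnion_finset_le {α ι : Type*} (q : PMF α) (t : Finset ι) (f : ι → Set α) :
    prob q (⋃ i ∈ t, f i) ≤ ∑ i ∈ t, prob q (f i) := by
  classical
  induction t using Finset.induction_on with
  | empty => simp [prob]
  | @insert a t ha ih =>
    rw [Finset.set_biUnion_insert, Finset.sum_insert ha]
    exact (prob_union_le _ _ _).trans (add_le_add le_rfl ih)

end Aux3

end OI


open OI

set_option maxHeartbeats 2000000 in
/-- sample complexity upper bound via covering the distinguisher class
(Algorithm "Distinguisher Covering"): there is a learner using
`n = O(ε⁻²(log N_{μ,Q}(D,ε/2) + log(2/δ))) ≤ O(ε⁻²(log N_{μ,P}(D,ε/4) + log(2/δ)))` samples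
(where `Q = P − P`) that, for every target predictor `p*`, outputs `p ∈ P` with
`‖p − p*‖_{μ,D} ≤ 3·inf_{p'∈P}‖p' − p*‖_{μ,D} + ε` with probability at least `1 − δ`. -/
theorem statement_3 :
    ∃ c : ℝ, 0 < c ∧
      ∀ (X : Type) (_ : Nonempty X) (μ : PMF X) (P D : Set (X → ℝ)),
        P.Nonempty → (∀ p ∈ P, Predictor p) →
        D.Nonempty → (∀ d ∈ D, Dist1 d) →
        ∀ ε δ : ℝ, ε ∈ Set.Ioo (0 : ℝ) 1 → δ ∈ Set.Ioo (0 : ℝ) 1 →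
          covN μ (P - P) D (ε / 2) ≤ covN μ P D (ε / 4) ∧
          (covN μ (P - P) D (ε / 2) ≠ ⊤ →
            ∃ n : ℕ, 0 < n ∧
              (n : ℝ) ≤ c * ε⁻¹ ^ 2 *
                (elog2 (covN μ (P - P) D (ε / 2)) + Real.logb 2 (2 / δ)) ∧
              ∃ A : Learner X n, ∀ pstar : X → ℝ, Predictor pstar →
                ENNReal.ofReal (1 - δ) ≤
                  prob (outDist μ pstar A)
                    {p | p ∈ P ∧ dnorm μ D (p - pstar) ≤ 3 * agTarget μ P D pstar + ε}) := by
  refine ⟨1024, by norm_num, ?_⟩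
  intro X _ μ P D hPne hP hDne hD ε δ hε hδ
  obtain ⟨hε0, hε1⟩ := hε
  obtain ⟨hδ0, hδ1⟩ := hδ
  have hPb : ∀ p ∈ P, ∀ x, |p x| ≤ 1 := by
    intro p hp x
    rcases hP p hp x with ⟨h0, h1⟩
    rw [abs_le]; exact ⟨by linarith, h1⟩
  have hDb : ∀ d ∈ D, ∀ x, |d x| ≤ 1 := by
    intro d hd x
    rcases hD d hd x with ⟨h0, h1⟩
    rw [abs_le]; exact ⟨h0, h1⟩
  refine ⟨covN_PP_le μ P D hPne hP hD hε0.le, ?_⟩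
  intro htop
  -- covering setup
  set Nn : ℕ := (covN μ (P - P) D (ε / 2)).toNat with hNndef
  have hNn : covN μ (P - P) D (ε / 2) = (Nn : ℕ∞) := (ENat.coe_toNat htop).symm
  have hcov1 : (1 : ℕ∞) ≤ covN μ (P - P) D (ε / 2) := by
    refine le_iInf fun C => le_iInf fun hC => ?_
    rw [Set.one_le_encard_iff_nonempty]
    obtain ⟨d, hd⟩ := hDne
    obtain ⟨c, hc, -⟩ := hC.2 d hd
    exact ⟨c, hc⟩
  have hNn1 : 1 ≤ Nn := by
    rw [hNn] at hcov1; exact_mod_cast hcov1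
  have hlt : covN μ (P - P) D (ε / 2) < ((Nn + 1 : ℕ) : ℕ∞) := by
    rw [hNn]; exact_mod_cast Nat.lt_succ_self Nn
  obtain ⟨C, hlt2⟩ := iInf_lt_iff.1 hlt
  obtain ⟨hC, hlt3⟩ := iInf_lt_iff.1 hlt2
  have hCfinite : C.Finite := by
    rw [← Set.encard_ne_top_iff]
    exact ne_top_of_lt hlt3
  set Cfin : Finset (X → ℝ) := hCfinite.toFinset with hCfin
  have hCfin_mem : ∀ d, d ∈ Cfin ↔ d ∈ C := fun d => Set.Finite.mem_toFinset _
  have hCcard : Cfin.card ≤ Nn := by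
    have h1 : (Cfin.card : ℕ∞) = C.encard := (Set.Finite.encard_eq_coe_toFinset_card hCfinite).symm
    have h2 : (Cfin.card : ℕ∞) < ((Nn + 1 : ℕ) : ℕ∞) := h1 ▸ hlt3
    exact Nat.lt_succ_iff.1 (by exact_mod_cast h2)
  have hCfne : Cfin.Nonempty := by
    obtain ⟨d, hd⟩ := hDne
    obtain ⟨c, hc, -⟩ := hC.2 d hd
    exact ⟨c, (hCfin_mem c).2 hc⟩
  have hCD : ∀ d ∈ Cfin, d ∈ D := fun d hd => hC.1 ((hCfin_mem d).1 hd)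
  -- numeric setup
  set Nr : ℝ := (Nn : ℝ) with hNr
  have hNr1 : (1:ℝ) ≤ Nr := by rw [hNr]; exact_mod_cast hNn1
  have hδ2 : (1:ℝ) < 2 * Nr / δ := by
    rw [lt_div_iff₀ hδ0]; nlinarith
  set x : ℝ := 1024 * ε⁻¹ ^ 2 * Real.log (2 * Nr / δ) with hx
  have hlogpos : 0 < Real.log (2 * Nr / δ) := Real.log_pos hδ2
  have hεinv : 0 < ε⁻¹ := inv_pos.2 hε0
  have hx0 : 0 < x := by
    rw [hx]; positivity
  set n : ℕ := ⌈x⌉₊ with hndef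
  have hn0 : 0 < n := Nat.ceil_pos.2 hx0
  have hnR : (0:ℝ) < (n:ℝ) := by exact_mod_cast hn0
  have hnx : x ≤ (n:ℝ) := Nat.le_ceil x
  have hnx2 : (n:ℝ) < x + 1 := Nat.ceil_lt_add_one hx0.le
  refine ⟨n, hn0, ?_, ?_⟩
  · -- cardinality bound on n
    have hlog2eq : elog2 (covN μ (P - P) D (ε / 2)) = Real.logb 2 Nr := rfl
    rw [hlog2eq]
    have hL1 : (1:ℝ) ≤ Real.logb 2 (2 / δ) := by
      have h2δ : (2:ℝ) ≤ 2 / δ := by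
        rw [le_div_iff₀ hδ0]; nlinarith
      have := Real.logb_le_logb_of_le one_lt_two (by norm_num : (0:ℝ) < 2) h2δ
      rwa [Real.logb_self_eq_one one_lt_two] at this
    have hL0 : 0 ≤ Real.logb 2 Nr := Real.logb_nonneg one_lt_two hNr1
    have hinv1 : (1:ℝ) ≤ ε⁻¹ ^ 2 := by
      have h1 : 1 ≤ ε⁻¹ := (one_le_inv₀ hε0).2 hε1.le
      nlinarith
    have hlogsplit : Real.log (2 * Nr / δ) = Real.log Nr + Real.log (2 / δ) := by
      rw [show 2 * Nr / δ = Nr * (2 / δ) by ring]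
      rw [Real.log_mul (by linarith) (by positivity)]
    have e1 : Real.log Nr = Real.logb 2 Nr * Real.log 2 := by
      rw [Real.logb]
      field_simp
    have e2 : Real.log (2 / δ) = Real.logb 2 (2 / δ) * Real.log 2 := by
      rw [Real.logb]
      field_simp
    have hlog2lt : Real.log 2 < 0.6931471808 := Real.log_two_lt_d9
    have hlog2pos : (0:ℝ) < Real.log 2 := Real.log_pos one_lt_two
    have hkey : x + 1 ≤ 1024 * ε⁻¹ ^ 2 * (Real.logb 2 Nr + Real.logb 2 (2 / δ)) := by
      rw [hx, hlogsplit, e1, e2]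
      have hsum1 : (1:ℝ) ≤ Real.logb 2 Nr + Real.logb 2 (2 / δ) := by linarith
      nlinarith [mul_le_mul_of_nonneg_left hsum1 (le_of_lt (by positivity : (0:ℝ) < ε⁻¹ ^ 2)),
        mul_le_mul_of_nonneg_left hinv1 (by linarith : (0:ℝ) ≤ Real.logb 2 Nr + Real.logb 2 (2 / δ))]
    linarith
  · -- the learner
    classical
    set h : (X → ℝ) → (X × Bool) → ℝ := fun d xo => (if xo.2 then (1:ℝ) else 0) * d xo.1 with hh
    set est : (X → ℝ) → (Fin n → X × Bool) → ℝ := fun d s => (n:ℝ)⁻¹ * ∑ i, h d (s i) with hest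
    set score : (Fin n → X × Bool) → (X → ℝ) → ℝ :=
      fun s p => Cfin.sup' hCfne (fun d => |inn μ p d - est d s|) with hscore
    have hscore0 : ∀ s, ∀ p', 0 ≤ score s p' := by
      intro s p'
      obtain ⟨d0, hd0⟩ := hCfne
      exact (abs_nonneg _).trans (Finset.le_sup' (fun d => |inn μ p' d - est d s|) hd0)
    have hex : ∀ s, ∃ p, p ∈ P ∧ score s p < sInf ((score s) '' P) + ε / 32 := by
      intro s
      obtain ⟨y, ⟨p, hp, rfl⟩, hy⟩ :=
        Real.lt_sInf_add_pos (hPne.image (score s)) (by positivity : (0:ℝ) < ε / 32)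
      exact ⟨p, hp, hy⟩
    choose pick hpickP hpickS using hex
    refine ⟨fun s => PMF.pure (pick s), ?_⟩
    intro pstar hps
    set q : PMF (X × Bool) := exDist μ pstar with hq
    have hpsb : ∀ x, |pstar x| ≤ 1 := by
      intro x
      rcases hps x with ⟨a, b⟩
      rw [abs_le]; exact ⟨by linarith, b⟩
    have hhb : ∀ d ∈ Cfin, ∀ xo, |h d xo| ≤ 1 := by
      intro d hd xo
      rcases xo with ⟨xx, o⟩
      rw [hh]
      cases o <;> simp [hDb d (hCD d hd) xx]
    have hm : ∀ d ∈ Cfin, pexp q (h d) = inn μ pstar d := by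
      intro d hd
      exact pexp_exDist μ pstar d hps (hDb d (hCD d hd))
    set bad : (X → ℝ) → Set (Fin n → X × Bool) :=
      fun d => {s | (n:ℝ) * (ε / 8) ≤ |(∑ i, h d (s i)) - n * pexp q (h d)|} with hbad
    have hbadle : ∀ d ∈ Cfin, prob (iid q n) (bad d) ≤
        2 * ENNReal.ofReal (Real.exp (-((n:ℝ) * (ε / 8) ^ 2) / 16)) := by
      intro d hd
      exact chern2 q (h d) (hhb d hd) (by positivity) (by linarith) n
    set U : Set (Fin n → X × Bool) := ⋃ d ∈ Cfin, bad d with hU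
    have hprobU : prob (iid q n) U ≤ ENNReal.ofReal δ := by
      have hEδ : Nr * (2 * Real.exp (-((n:ℝ) * (ε / 8) ^ 2) / 16)) ≤ δ := by
        have h1 : Real.log (2 * Nr / δ) ≤ (n:ℝ) * (ε / 8) ^ 2 / 16 := by
          have hinv : ε⁻¹ ^ 2 * ε ^ 2 = 1 := by
            field_simp
          have h2 : x * ε ^ 2 = 1024 * Real.log (2 * Nr / δ) := by
            rw [hx]; nlinarith [hinv]
          have h3 : x * ε ^ 2 ≤ (n:ℝ) * ε ^ 2 :=
            mul_le_mul_of_nonneg_right hnx (by positivity)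
          nlinarith
        have h2 : Real.exp (-((n:ℝ) * (ε / 8) ^ 2) / 16) ≤ δ / (2 * Nr) := by
          have h3 : Real.exp (-((n:ℝ) * (ε / 8) ^ 2) / 16) ≤
              Real.exp (-Real.log (2 * Nr / δ)) := by
            apply Real.exp_le_exp.2
            linarith
          rw [Real.exp_neg, Real.exp_log (by positivity)] at h3
          rw [inv_div] at h3
          exact h3
        have hNr0 : (0:ℝ) < Nr := by linarith
        have h4 : (2 * Nr) * Real.exp (-((n:ℝ) * (ε / 8) ^ 2) / 16) ≤
            (2 * Nr) * (δ / (2 * Nr)) := mul_le_mul_of_nonneg_left h2 (by positivity)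
        have h5 : (2 * Nr) * (δ / (2 * Nr)) = δ := by field_simp
        nlinarith [h4, h5]
      calc prob (iid q n) U ≤ ∑ d ∈ Cfin, prob (iid q n) (bad d) :=
            prob_biUnion_finset_le _ _ _
        _ ≤ ∑ _d ∈ Cfin, 2 * ENNReal.ofReal (Real.exp (-((n:ℝ) * (ε / 8) ^ 2) / 16)) :=
            Finset.sum_le_sum hbadle
        _ = (Cfin.card : ℝ≥0∞) * (2 * ENNReal.ofReal (Real.exp (-((n:ℝ) * (ε / 8) ^ 2) / 16))) := by
            rw [Finset.sum_const, nsmul_eq_mul]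
        _ ≤ (Nn : ℝ≥0∞) * (2 * ENNReal.ofReal (Real.exp (-((n:ℝ) * (ε / 8) ^ 2) / 16))) := by
            exact mul_le_mul_left (by exact_mod_cast hCcard) _
        _ = ENNReal.ofReal (Nr * (2 * Real.exp (-((n:ℝ) * (ε / 8) ^ 2) / 16))) := by
            rw [ENNReal.ofReal_mul (by linarith : (0:ℝ) ≤ Nr),
              ENNReal.ofReal_mul (by norm_num : (0:ℝ) ≤ 2)]
            rw [hNr, ENNReal.ofReal_natCast, ENNReal.ofReal_ofNat]
        _ ≤ ENNReal.ofReal δ := ENNReal.ofReal_le_ofReal hEδ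
    set G : Set (Fin n → X × Bool) := Uᶜ with hG
    -- deterministic analysis on the good event
    have hgood : ∀ s ∈ G, pick s ∈ P ∧
        dnorm μ D (pick s - pstar) ≤ 3 * agTarget μ P D pstar + ε := by
      intro s hs
      refine ⟨hpickP s, ?_⟩
      have hsest : ∀ d ∈ Cfin, |est d s - inn μ pstar d| ≤ ε / 8 := by
        intro d hd
        have hnotbad : s ∉ bad d := fun hmem => hs (Set.mem_biUnion hd hmem)
        have hnb : |(∑ i, h d (s i)) - n * inn μ pstar d| < (n:ℝ) * (ε / 8) := by
          rw [← hm d hd]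
          simpa [hbad, not_le] using hnotbad
        have heq : est d s - inn μ pstar d =
            (n:ℝ)⁻¹ * ((∑ i, h d (s i)) - n * inn μ pstar d) := by
          rw [hest]
          dsimp only
          field_simp
        rw [heq, abs_mul, abs_of_nonneg (inv_nonneg.2 hnR.le)]
        calc (n:ℝ)⁻¹ * |(∑ i, h d (s i)) - n * inn μ pstar d|
            ≤ (n:ℝ)⁻¹ * ((n:ℝ) * (ε / 8)) :=
              mul_le_mul_of_nonneg_left hnb.le (inv_nonneg.2 hnR.le)
          _ = ε / 8 := by field_simp
      obtain ⟨y0, ⟨p', hp'P, rfl⟩, hp'lt⟩ :=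
        Real.lt_sInf_add_pos (hPne.image (fun p' => dnorm μ D (p' - pstar)))
          (by positivity : (0:ℝ) < ε / 32)
      have hOPT : dnorm μ D (p' - pstar) < agTarget μ P D pstar + ε / 32 := hp'lt
      set p : X → ℝ := pick s with hpdef
      have hpb := hPb p (hpickP s)
      have hp'b := hPb p' hp'P
      have hdn' : ∀ g ∈ D, |inn μ (p' - pstar) g| ≤ dnorm μ D (p' - pstar) := by
        intro g hg
        refine le_dnorm μ hg (b := 2 * 1) (fun g' hg' => ?_)
        exact abs_inn_le μ _ _ (abs_sub_two hp'b hpsb) (hDb g' hg') (by norm_num) zero_le_one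
      have hii : score s p' ≤ dnorm μ D (p' - pstar) + ε / 8 := by
        rw [hscore]
        refine Finset.sup'_le _ _ fun d hd => ?_
        have e1 : inn μ p' d - inn μ pstar d = inn μ (p' - pstar) d :=
          (inn_sub_left μ p' pstar d hp'b hpsb (hDb d (hCD d hd)) zero_le_one zero_le_one).symm
        have t2 := hsest d hd
        calc |inn μ p' d - est d s|
            ≤ |inn μ p' d - inn μ pstar d| + |inn μ pstar d - est d s| := abs_sub_le _ _ _
          _ ≤ dnorm μ D (p' - pstar) + ε / 8 := by
              rw [e1, abs_sub_comm]
              exact add_le_add (hdn' d (hCD d hd)) t2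
      have hi : score s p ≤ score s p' + ε / 32 := by
        have h1 := hpickS s
        have h2 : sInf ((score s) '' P) ≤ score s p' := by
          refine csInf_le ⟨0, ?_⟩ (Set.mem_image_of_mem _ hp'P)
          rintro y ⟨pp, hpp, rfl⟩
          exact hscore0 s pp
        linarith
      refine dnorm_le μ hDne fun d hd => ?_
      obtain ⟨cd, hcdC, hcd⟩ := hC.2 d hd
      have hcdD : cd ∈ D := hC.1 hcdC
      have hcdfin : cd ∈ Cfin := (hCfin_mem cd).2 hcdC
      have e0 : inn μ (p - pstar) d = inn μ (p - p') d + inn μ (p' - pstar) d := by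
        rw [inn_sub_left μ p pstar d hpb hpsb (hDb d hd) zero_le_one zero_le_one,
          inn_sub_left μ p p' d hpb hp'b (hDb d hd) zero_le_one zero_le_one,
          inn_sub_left μ p' pstar d hp'b hpsb (hDb d hd) zero_le_one zero_le_one]
        ring
      have e1 : inn μ (p - p') d = inn μ (p - p') cd + inn μ (p - p') (d - cd) := by
        rw [inn_sub_right μ (p - p') d cd (abs_sub_two hpb hp'b) (hDb d hd) (hDb cd hcdD)
          (by norm_num : (0:ℝ) ≤ 2)]
        ring
      have hQ : |inn μ (p - p') (d - cd)| ≤ ε / 2 := by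
        rw [inn_comm]
        refine (le_dnorm μ (Set.sub_mem_sub (hpickP s) hp'P) (b := 2 * 2)
          (fun g' hg' => ?_)).trans hcd
        obtain ⟨p1, hp1, p2, hp2, rfl⟩ := Set.mem_sub.1 hg'
        exact abs_inn_le μ _ _ (abs_sub_two (hDb d hd) (hDb cd hcdD))
          (abs_sub_two (hPb p1 hp1) (hPb p2 hp2)) (by norm_num) (by norm_num)
      have e2 : inn μ (p - p') cd = (inn μ p cd - est cd s) + (est cd s - inn μ pstar cd) +
          (inn μ pstar cd - inn μ p' cd) := by
        rw [inn_sub_left μ p p' cd hpb hp'b (hDb cd hcdD) zero_le_one zero_le_one]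
        ring
      have t1 : |inn μ p cd - est cd s| ≤ score s p := by
        rw [hscore]
        exact Finset.le_sup' (fun d => |inn μ p d - est d s|) hcdfin
      have t2 : |est cd s - inn μ pstar cd| ≤ ε / 8 := hsest cd hcdfin
      have t3 : |inn μ pstar cd - inn μ p' cd| ≤ dnorm μ D (p' - pstar) := by
        have h4 := hdn' cd hcdD
        rw [inn_sub_left μ p' pstar cd hp'b hpsb (hDb cd hcdD) zero_le_one zero_le_one] at h4
        rw [abs_sub_comm]
        exact h4
      have habs1 : |inn μ (p - p') cd| ≤ score s p + ε / 8 + dnorm μ D (p' - pstar) := by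
        rw [e2]
        calc |inn μ p cd - est cd s + (est cd s - inn μ pstar cd) +
              (inn μ pstar cd - inn μ p' cd)|
            ≤ |inn μ p cd - est cd s + (est cd s - inn μ pstar cd)| +
              |inn μ pstar cd - inn μ p' cd| := abs_add_le _ _
          _ ≤ |inn μ p cd - est cd s| + |est cd s - inn μ pstar cd| +
              |inn μ pstar cd - inn μ p' cd| := by
              linarith [abs_add_le (inn μ p cd - est cd s) (est cd s - inn μ pstar cd)]
          _ ≤ score s p + ε / 8 + dnorm μ D (p' - pstar) := by linarith
      have habs0 : |inn μ (p - pstar) d| ≤ |inn μ (p - p') cd| + |inn μ (p - p') (d - cd)| +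
          |inn μ (p' - pstar) d| := by
        rw [e0, e1]
        calc |inn μ (p - p') cd + inn μ (p - p') (d - cd) + inn μ (p' - pstar) d|
            ≤ |inn μ (p - p') cd + inn μ (p - p') (d - cd)| + |inn μ (p' - pstar) d| :=
              abs_add_le _ _
          _ ≤ |inn μ (p - p') cd| + |inn μ (p - p') (d - cd)| + |inn μ (p' - pstar) d| := by
              linarith [abs_add_le (inn μ (p - p') cd) (inn μ (p - p') (d - cd))]
      have hD4 := hdn' d hd
      linarith
    -- probability conclusion
    have hprobG : ENNReal.ofReal (1 - δ) ≤ prob (iid q n) G := by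
      have hcompl := prob_compl_add (iid q n) U
      have hUne : prob (iid q n) U ≠ ⊤ :=
        ne_top_of_le_ne_top ENNReal.one_ne_top (prob_le_one _ _)
      have hGeq : prob (iid q n) G = 1 - prob (iid q n) U :=
        ENNReal.eq_sub_of_add_eq hUne hcompl
      rw [hGeq]
      have h1 : ENNReal.ofReal (1 - δ) = 1 - ENNReal.ofReal δ := by
        rw [ENNReal.ofReal_sub 1 hδ0.le, ENNReal.ofReal_one]
      rw [h1]
      exact tsub_le_tsub_left hprobU 1
    refine hprobG.trans ?_
    unfold prob outDist
    rw [← hq, PMF.toOuterMeasure_bind_apply, PMF.toOuterMeasure_apply]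
    refine ENNReal.tsum_le_tsum fun s => ?_
    by_cases hsG : s ∈ G
    · rw [Set.indicator_of_mem hsG, PMF.toOuterMeasure_pure_apply]
      have hmem : pick s ∈ {p : X → ℝ | p ∈ P ∧
          dnorm μ D (p - pstar) ≤ 3 * agTarget μ P D pstar + ε} := hgood s hsG
      rw [if_pos hmem, mul_one]
    · rw [Set.indicator_of_notMem hsG]
      exact zero_le
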